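/- arXiv:2209.10154 — 4 statements merged into one kernel-verified Lean document; each statement's English description precedes it below -/
import Mathlib

section
/- Let n ≥ 1, μ > 2, let δ > 0 be the unique positive root of μ log(1+δ) = 2δ, let δ₁ ∈ (0, min{μ/2 - 1, δ}], and let u₀ ∈ L¹(ℝⁿ), u₁ ∈ L^{1,1}(ℝⁿ). For ξ with 0 < |ξ| ≤ δ₁ write r := |ξ|, h(r) := μ² log²(1+r) - 4r², λ±(r) := (-μ log(1+r) ± √(h(r)))/2, and define w(t,ξ) := ((û₁(ξ) - λ₋(r)û₀(ξ))/(λ₊(r) - λ₋(r))) e^{λ₊(r)t} + ((λ₊(r)û₀(ξ) - û₁(ξ))/(λ₊(r) - λ₋(r))) e^{λ₋(r)t} and ν(t,ξ) := P₁ (e^{λ₊(r)t} - e^{λ₋(r)t})/√(h(r)), where P₁ := ∫_{ℝⁿ} u₁(x) dx. Then there exist constants C > 0 (depending on n and μ) and t₀ > 0 such that for all t ≥ t₀: ∫_{|ξ| ≤ δ₁} |w(t,ξ) - ν(t,ξ)|² dξ ≤ C (‖u₀‖₁² + ‖u₁‖²_{1,1}) t^{-n}. -/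
open MeasureTheory

/-- The Fourier transform `f̂(ξ) = ∫ e^{-i x·ξ} f(x) dx`. -/
noncomputable def fourierTransformCLM' {n : ℕ} (f : EuclideanSpace ℝ (Fin n) → ℂ)
    (ξ : EuclideanSpace ℝ (Fin n)) : ℂ :=
  ∫ x, Complex.exp (-(Complex.I * ((inner ℝ x ξ : ℝ) : ℂ))) * f x

lemma aux_norm_exp (c : ℝ) : ‖Complex.exp (-(Complex.I * c))‖ = 1 := by
  rw [Complex.norm_exp]
  simp

lemma aux_exp_sub_one (c : ℝ) : ‖Complex.exp (-(Complex.I * c)) - 1‖ ≤ 2 * |c| := by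
  have habs : ‖(-(Complex.I * c))‖ = |c| := by simp
  rcases le_or_gt |c| 1 with hc | hc
  · have := Complex.norm_exp_sub_one_le (x := -(Complex.I * c)) (by rw [habs]; exact hc)
    rwa [habs] at this
  · calc ‖Complex.exp (-(Complex.I * c)) - 1‖ ≤ ‖Complex.exp (-(Complex.I * c))‖ + ‖(1:ℂ)‖ :=
        norm_sub_le _ _
    _ = 2 := by rw [aux_norm_exp]; norm_num
    _ ≤ 2 * |c| := by nlinarith

lemma aux_integrable_exp {n : ℕ} :
    Integrable (fun x : EuclideanSpace ℝ (Fin n) => Real.exp (-‖x‖)) := by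
  have hnr : (Module.finrank ℝ (EuclideanSpace ℝ (Fin n)) : ℝ) < (n + 1 : ℝ) := by
    rw [finrank_euclideanSpace_fin]; norm_num
  have hbase := integrable_one_add_norm (E := EuclideanSpace ℝ (Fin n)) (μ := volume)
    (r := (n+1:ℝ)) hnr
  refine (hbase.const_mul ((n+1:ℝ)^(n+1))).mono' ?_ ?_
  · exact (Real.continuous_exp.comp continuous_norm.neg).aestronglyMeasurable
  · refine Filter.Eventually.of_forall (fun x => ?_)
    have hs : (0:ℝ) ≤ ‖x‖ := norm_nonneg _
    have h1 : (1 + ‖x‖) ≤ (n+1) * Real.exp (‖x‖ / (n+1)) := by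
      have := Real.add_one_le_exp (‖x‖ / (n+1))
      have hn1 : (0:ℝ) < (n+1:ℝ) := by positivity
      calc (1:ℝ) + ‖x‖ ≤ (n+1) * (‖x‖/(n+1) + 1) := by
            rw [mul_add, mul_div_cancel₀ _ hn1.ne']; nlinarith
      _ ≤ (n+1) * Real.exp (‖x‖/(n+1)) := by nlinarith [Real.exp_pos (‖x‖/(n+1))]
    have h2 : (1 + ‖x‖)^(n+1) ≤ (n+1:ℝ)^(n+1) * Real.exp ‖x‖ := by
      calc (1 + ‖x‖)^(n+1) ≤ ((n+1) * Real.exp (‖x‖ / (n+1)))^(n+1) := by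
            apply pow_le_pow_left₀ (by linarith) h1
      _ = (n+1:ℝ)^(n+1) * Real.exp ‖x‖ := by
            rw [mul_pow, ← Real.exp_nat_mul]
            congr 2
            field_simp
            push_cast; ring
    have hrpow : (1 + ‖x‖) ^ (-(n+1:ℝ)) = ((1 + ‖x‖)^(n+1))⁻¹ := by
      rw [Real.rpow_neg (by linarith), ← Real.rpow_natCast (1+‖x‖) (n+1)]
      norm_num
    rw [Real.norm_eq_abs, abs_of_pos (Real.exp_pos _)]
    rw [hrpow, Real.exp_neg, ← div_eq_mul_inv, inv_eq_one_div,
      div_le_div_iff₀ (Real.exp_pos _) (by positivity)]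
    linarith [h2]

lemma aux_integral_scale {n : ℕ} {a : ℝ} (ha : 0 < a) :
    ∫ x : EuclideanSpace ℝ (Fin n), Real.exp (-(a * ‖x‖)) =
    a⁻¹ ^ n * ∫ x : EuclideanSpace ℝ (Fin n), Real.exp (-‖x‖) := by
  have h := Measure.integral_comp_smul (volume)
    (f := fun x : EuclideanSpace ℝ (Fin n) => Real.exp (-‖x‖)) a
  simp only [norm_smul, Real.norm_eq_abs, abs_of_pos ha, finrank_euclideanSpace_fin,
    smul_eq_mul, inv_pow, abs_inv, abs_pow, abs_of_pos ha] at h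
  rw [h, inv_pow]

lemma aux_integrable_scale {n : ℕ} {a : ℝ} (ha : 0 < a) :
    Integrable (fun x : EuclideanSpace ℝ (Fin n) => Real.exp (-(a * ‖x‖))) := by
  have hbase : Integrable (fun x : EuclideanSpace ℝ (Fin n) => Real.exp (-‖x‖)) :=
    aux_integrable_exp
  have h := (integrable_comp_smul_iff (volume : Measure (EuclideanSpace ℝ (Fin n)))
    (fun x : EuclideanSpace ℝ (Fin n) => Real.exp (-‖x‖)) ha.ne').2 hbase
  simpa only [norm_smul, Real.norm_eq_abs, abs_of_pos ha, smul_eq_mul] using h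

lemma aux_hpos (μ δ₁ : ℝ) (hμ : 2 < μ) (hδ₁ : 0 < δ₁) (hle : δ₁ ≤ μ/2 - 1) :
    0 < μ^2 * Real.log (1+δ₁)^2 - 4*δ₁^2 := by
  have h1δ : (0:ℝ) < 1 + δ₁ := by linarith
  have hlog : δ₁/(1+δ₁) < Real.log (1+δ₁) := by
    have h := Real.log_lt_sub_one_of_pos (x := (1+δ₁)⁻¹) (by positivity)
      (by rw [ne_eq, inv_eq_one_div, div_eq_one_iff_eq h1δ.ne']; intro h; linarith)
    rw [Real.log_inv] at h
    have : (1+δ₁)⁻¹ - 1 = -(δ₁/(1+δ₁)) := by field_simp; ring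
    rw [this] at h
    linarith
  have hLpos : 0 < Real.log (1+δ₁) := Real.log_pos (by linarith)
  have hmu : 2*(1+δ₁) ≤ μ := by linarith
  have key : 2*δ₁ < μ * Real.log (1+δ₁) := by
    have h2 : 2*δ₁ < 2*(1+δ₁) * Real.log (1+δ₁) := by
      rw [div_lt_iff₀ h1δ] at hlog; nlinarith
    nlinarith
  nlinarith [mul_pos (mul_pos (by linarith : (0:ℝ) < μ) hLpos) hδ₁]

lemma aux_concave (δ₁ r : ℝ) (hδ₁ : 0 < δ₁) (hr0 : 0 ≤ r) (hr : r ≤ δ₁) :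
    r/δ₁ * Real.log (1+δ₁) ≤ Real.log (1+r) := by
  have h := (strictConcaveOn_log_Ioi.concaveOn).2
    (Set.mem_Ioi.2 one_pos) (Set.mem_Ioi.2 (by linarith : (0:ℝ) < 1+δ₁))
    (show (0:ℝ) ≤ 1 - r/δ₁ by rw [sub_nonneg]; exact div_le_one_of_le₀ hr hδ₁.le)
    (by positivity : (0:ℝ) ≤ r/δ₁) (by ring)
  have harg : (1 - r/δ₁) • (1:ℝ) + (r/δ₁) • (1+δ₁) = 1 + r := by
    rw [smul_eq_mul, smul_eq_mul, mul_one, mul_add, mul_one, div_mul_cancel₀ _ hδ₁.ne']; ring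
  rw [harg] at h
  simpa [Real.log_one] using h

set_option maxHeartbeats 1000000 in
/-- Lemma 3.2 (low frequency estimate, `μ > 2`): for `u₀ ∈ L¹`, `u₁ ∈ L^{1,1}`,
`∫_{|ξ|≤δ₁} |w(t,ξ) - ν(t,ξ)|² dξ ≤ C(‖u₀‖₁² + ‖u₁‖²_{1,1}) t^{-n}` for large `t`. -/
theorem stmt15 (n : ℕ) (hn : 1 ≤ n) (μ δ δ₁ : ℝ) (hμ : 2 < μ) (hδ : 0 < δ)
    (hroot : μ * Real.log (1 + δ) = 2 * δ)
    (hδ₁ : 0 < δ₁) (hδ₁le : δ₁ ≤ min (μ / 2 - 1) δ)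
    (u₀ u₁ : EuclideanSpace ℝ (Fin n) → ℂ)
    (hu₀ : Integrable u₀) (hu₁ : Integrable u₁)
    (hu₁w : Integrable (fun x : EuclideanSpace ℝ (Fin n) => (1 + ‖x‖) * ‖u₁ x‖)) :
    let h : ℝ → ℝ := fun r => μ ^ 2 * Real.log (1 + r) ^ 2 - 4 * r ^ 2
    let lp : ℝ → ℝ := fun r => (-(μ * Real.log (1 + r)) + Real.sqrt (h r)) / 2
    let lm : ℝ → ℝ := fun r => (-(μ * Real.log (1 + r)) - Real.sqrt (h r)) / 2
    let P₁ : ℂ := ∫ x, u₁ x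
    let w : ℝ → EuclideanSpace ℝ (Fin n) → ℂ := fun t ξ =>
      ((fourierTransformCLM' u₁ ξ - ((lm ‖ξ‖ : ℝ) : ℂ) * fourierTransformCLM' u₀ ξ) /
          (((lp ‖ξ‖ : ℝ) : ℂ) - ((lm ‖ξ‖ : ℝ) : ℂ))) * Complex.exp ((lp ‖ξ‖ : ℂ) * (t : ℂ)) +
      ((((lp ‖ξ‖ : ℝ) : ℂ) * fourierTransformCLM' u₀ ξ - fourierTransformCLM' u₁ ξ) /
          (((lp ‖ξ‖ : ℝ) : ℂ) - ((lm ‖ξ‖ : ℝ) : ℂ))) * Complex.exp ((lm ‖ξ‖ : ℂ) * (t : ℂ))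
    let ν : ℝ → EuclideanSpace ℝ (Fin n) → ℂ := fun t ξ =>
      P₁ * (((Real.exp (lp ‖ξ‖ * t) - Real.exp (lm ‖ξ‖ * t)) / Real.sqrt (h ‖ξ‖) : ℝ) : ℂ)
    ∃ C t₀ : ℝ, 0 < C ∧ 0 < t₀ ∧ ∀ t : ℝ, t₀ ≤ t →
      (∫ ξ in Metric.closedBall (0 : EuclideanSpace ℝ (Fin n)) δ₁, ‖w t ξ - ν t ξ‖ ^ 2) ≤
        C * ((∫ x, ‖u₀ x‖) ^ 2 + (∫ x, (1 + ‖x‖) * ‖u₁ x‖) ^ 2) * t ^ (-(n : ℝ)) := by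
  intro hf lp lm P₁ w ν
  have hfdef : ∀ r, hf r = μ ^ 2 * Real.log (1 + r) ^ 2 - 4 * r ^ 2 := fun _ => rfl
  have hlpdef : ∀ r, lp r = (-(μ * Real.log (1 + r)) + Real.sqrt (hf r)) / 2 := fun _ => rfl
  have hlmdef : ∀ r, lm r = (-(μ * Real.log (1 + r)) - Real.sqrt (hf r)) / 2 := fun _ => rfl
  have hP₁def : P₁ = ∫ x, u₁ x := rfl
  have hwdef : ∀ (t : ℝ) (ξ : EuclideanSpace ℝ (Fin n)), w t ξ =
      ((fourierTransformCLM' u₁ ξ - ((lm ‖ξ‖ : ℝ) : ℂ) * fourierTransformCLM' u₀ ξ) /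
          (((lp ‖ξ‖ : ℝ) : ℂ) - ((lm ‖ξ‖ : ℝ) : ℂ))) * Complex.exp ((lp ‖ξ‖ : ℂ) * (t : ℂ)) +
      ((((lp ‖ξ‖ : ℝ) : ℂ) * fourierTransformCLM' u₀ ξ - fourierTransformCLM' u₁ ξ) /
          (((lp ‖ξ‖ : ℝ) : ℂ) - ((lm ‖ξ‖ : ℝ) : ℂ))) * Complex.exp ((lm ‖ξ‖ : ℂ) * (t : ℂ)) :=
    fun _ _ => rfl
  have hνdef : ∀ (t : ℝ) (ξ : EuclideanSpace ℝ (Fin n)), ν t ξ =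
      P₁ * (((Real.exp (lp ‖ξ‖ * t) - Real.exp (lm ‖ξ‖ * t)) / Real.sqrt (hf ‖ξ‖) : ℝ) : ℂ) :=
    fun _ _ => rfl
  clear_value hf lp lm P₁ w ν
  set N₀ : ℝ := ∫ x, ‖u₀ x‖ with hN₀
  set N₁ : ℝ := ∫ x, (1 + ‖x‖) * ‖u₁ x‖ with hN₁
  clear_value N₀ N₁
  have hN₀0 : 0 ≤ N₀ := hN₀ ▸ integral_nonneg (fun x => norm_nonneg _)
  have hN₁0 : 0 ≤ N₁ := hN₁ ▸ integral_nonneg (fun x => by positivity)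
  have hμ0 : 0 < μ := by linarith
  have hδ₁' : δ₁ ≤ μ/2 - 1 := le_trans hδ₁le (min_le_left _ _)
  have hhδ₁ : 0 < hf δ₁ := by rw [hfdef δ₁]; exact aux_hpos μ δ₁ hμ hδ₁ hδ₁'
  obtain ⟨c₀, hc₀⟩ : ∃ c₀ : ℝ, c₀ = Real.sqrt (hf δ₁) / δ₁ := ⟨_, rfl⟩
  have hc₀pos : 0 < c₀ := hc₀ ▸ div_pos (Real.sqrt_pos.2 hhδ₁) hδ₁
  obtain ⟨K, hK⟩ : ∃ K : ℝ, K = 2 * μ * (N₀ + N₁) / c₀ := ⟨_, rfl⟩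
  have hK0 : 0 ≤ K := by
    rw [hK]
    exact div_nonneg (mul_nonneg (by linarith) (by linarith)) hc₀pos.le
  -- pointwise estimate
  have key : ∀ t : ℝ, 0 ≤ t → ∀ ξ : EuclideanSpace ℝ (Fin n), ‖ξ‖ ≤ δ₁ →
      ‖w t ξ - ν t ξ‖ ≤ K * Real.exp (-(1/μ * t * ‖ξ‖)) := by
    intro t ht ξ hξ
    by_cases hr0 : ‖ξ‖ = 0
    · have hzero : w t ξ - ν t ξ = 0 := by
        have h0 : hf 0 = 0 := by rw [hfdef 0]; norm_num
        have hlp0 : lp 0 = 0 := by rw [hlpdef 0, h0]; simp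
        have hlm0 : lm 0 = 0 := by rw [hlmdef 0, h0]; simp
        rw [hwdef, hνdef, hr0, hlp0, hlm0, h0]
        simp
      rw [hzero, norm_zero]
      exact mul_nonneg hK0 (Real.exp_pos _).le
    have hrpos : 0 < ‖ξ‖ := lt_of_le_of_ne (norm_nonneg _) (Ne.symm hr0)
    -- Fourier estimates
    have hA : ‖fourierTransformCLM' u₀ ξ‖ ≤ N₀ := by
      rw [fourierTransformCLM']
      refine le_trans (norm_integral_le_integral_norm _) (le_of_eq ?_)
      rw [hN₀]
      congr 1
      ext x
      rw [norm_mul, aux_norm_exp, one_mul]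
    have hBP : ‖fourierTransformCLM' u₁ ξ - P₁‖ ≤ 2 * ‖ξ‖ * N₁ := by
      have hmeas : AEStronglyMeasurable
          (fun x : EuclideanSpace ℝ (Fin n) =>
            Complex.exp (-(Complex.I * ((inner ℝ x ξ : ℝ) : ℂ)))) volume := by
        apply Continuous.aestronglyMeasurable
        exact Complex.continuous_exp.comp
          ((continuous_const.mul (Complex.continuous_ofReal.comp
            ((continuous_id.inner continuous_const)))).neg)
      have hint : Integrable (fun x : EuclideanSpace ℝ (Fin n) =>
          Complex.exp (-(Complex.I * ((inner ℝ x ξ : ℝ) : ℂ))) * u₁ x) :=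
        hu₁.bdd_mul hmeas (c := 1) (Filter.Eventually.of_forall fun x => le_of_eq (aux_norm_exp _))
      have heq : fourierTransformCLM' u₁ ξ - P₁ =
          ∫ x, (Complex.exp (-(Complex.I * ((inner ℝ x ξ : ℝ) : ℂ))) - 1) * u₁ x := by
        rw [fourierTransformCLM', hP₁def, ← integral_sub hint hu₁]
        congr 1
        ext x
        ring
      rw [heq]
      refine le_trans (norm_integral_le_integral_norm _) ?_
      have hptw : ∀ x : EuclideanSpace ℝ (Fin n),
          ‖(Complex.exp (-(Complex.I * ((inner ℝ x ξ : ℝ) : ℂ))) - 1) * u₁ x‖ ≤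
            2 * ‖ξ‖ * ((1 + ‖x‖) * ‖u₁ x‖) := by
        intro x
        rw [norm_mul]
        have h1 : ‖Complex.exp (-(Complex.I * ((inner ℝ x ξ : ℝ) : ℂ))) - 1‖ ≤
            2 * |(inner ℝ x ξ : ℝ)| := aux_exp_sub_one _
        have h2 : |(inner ℝ x ξ : ℝ)| ≤ ‖x‖ * ‖ξ‖ := abs_real_inner_le_norm x ξ
        have h3 : ‖Complex.exp (-(Complex.I * ((inner ℝ x ξ : ℝ) : ℂ))) - 1‖ ≤
            2 * ‖ξ‖ * (1 + ‖x‖) := by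
          refine le_trans h1 ?_
          have hx0 : (0:ℝ) ≤ ‖x‖ := norm_nonneg _
          have h2' : ‖x‖ * ‖ξ‖ ≤ (1 + ‖x‖) * ‖ξ‖ :=
            mul_le_mul_of_nonneg_right (by linarith) hrpos.le
          nlinarith [h2, h2']
        calc ‖Complex.exp (-(Complex.I * ((inner ℝ x ξ : ℝ) : ℂ))) - 1‖ * ‖u₁ x‖
            ≤ (2 * ‖ξ‖ * (1 + ‖x‖)) * ‖u₁ x‖ :=
              mul_le_mul_of_nonneg_right h3 (norm_nonneg _)
        _ = 2 * ‖ξ‖ * ((1 + ‖x‖) * ‖u₁ x‖) := by ring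
      calc (∫ x, ‖(Complex.exp (-(Complex.I * ((inner ℝ x ξ : ℝ) : ℂ))) - 1) * u₁ x‖)
          ≤ ∫ x, 2 * ‖ξ‖ * ((1 + ‖x‖) * ‖u₁ x‖) := by
            refine integral_mono_of_nonneg (Filter.Eventually.of_forall fun x => norm_nonneg _)
              (hu₁w.const_mul (2*‖ξ‖)) (Filter.Eventually.of_forall hptw)
      _ = 2 * ‖ξ‖ * N₁ := by rw [hN₁, integral_const_mul]
    -- rewrite the goal
    rw [hwdef t ξ, hνdef t ξ]
    set r : ℝ := ‖ξ‖ with hrdef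
    set A : ℂ := fourierTransformCLM' u₀ ξ with hAdef
    set B : ℂ := fourierTransformCLM' u₁ ξ with hBdef
    clear_value r A B
    set L : ℝ := Real.log (1 + r) with hLdef
    set L₁ : ℝ := Real.log (1 + δ₁) with hL₁def
    set s : ℝ := Real.sqrt (hf r) with hsdef
    clear_value L L₁ s
    -- real estimates
    have hL0 : 0 < L := hLdef ▸ Real.log_pos (by linarith)
    have hLr : L ≤ r := by
      have := Real.log_le_sub_one_of_pos (show (0:ℝ) < 1 + r by linarith)
      rw [← hLdef] at this; linarith
    have hL₁0 : 0 < L₁ := hL₁def ▸ Real.log_pos (by linarith)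
    have hconc : r/δ₁ * L₁ ≤ L := by
      rw [hLdef, hL₁def]; exact aux_concave δ₁ r hδ₁ hrpos.le hξ
    have hhr : (r/δ₁)^2 * hf δ₁ ≤ hf r := by
      rw [hfdef r, hfdef δ₁]
      have e1 : (r/δ₁)^2 * δ₁^2 = r^2 := by field_simp
      have h2 : ((r/δ₁)*L₁)^2 ≤ L^2 :=
        pow_le_pow_left₀ (mul_nonneg (div_nonneg hrpos.le hδ₁.le) hL₁0.le) hconc 2
      have h3 := mul_le_mul_of_nonneg_left h2 (sq_nonneg μ)
      rw [hLdef] at h3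
      rw [hL₁def] at h3
      linarith [h3, e1]
    have hhrpos : 0 < hf r :=
      lt_of_lt_of_le (mul_pos (pow_pos (div_pos hrpos hδ₁) 2) hhδ₁) hhr
    have hs2 : s^2 = hf r := by rw [hsdef]; exact Real.sq_sqrt hhrpos.le
    have hspos : 0 < s := hsdef ▸ Real.sqrt_pos.2 hhrpos
    have hsc : c₀ * r ≤ s := by
      rw [hsdef, hc₀]
      calc Real.sqrt (hf δ₁) / δ₁ * r = Real.sqrt ((r/δ₁)^2 * hf δ₁) := by
            rw [Real.sqrt_mul (sq_nonneg _), Real.sqrt_sq (div_nonneg hrpos.le hδ₁.le)]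
            field_simp
      _ ≤ Real.sqrt (hf r) := Real.sqrt_le_sqrt hhr
    have hsle : s ≤ μ * L := by
      have h1 : hf r ≤ (μ*L)^2 := by rw [hfdef r, hLdef]; linarith [sq_nonneg r]
      calc s = Real.sqrt (hf r) := hsdef
      _ ≤ Real.sqrt ((μ*L)^2) := Real.sqrt_le_sqrt h1
      _ = μ * L := Real.sqrt_sq (mul_nonneg hμ0.le hL0.le)
    have hlpval : lp r = (-(μ * L) + s) / 2 := by rw [hlpdef r, ← hLdef, ← hsdef]
    have hlmval : lm r = (-(μ * L) - s) / 2 := by rw [hlmdef r, ← hLdef, ← hsdef]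
    have hμLr : μ * L ≤ μ * r := mul_le_mul_of_nonneg_left hLr hμ0.le
    have hlp_le : lp r ≤ -(r/μ) := by
      have hps : 0 < μ*L + s := add_pos (mul_pos hμ0 hL0) hspos
      have hprod : (μ*L - s)*(μ*L + s) = 4*r^2 := by
        have hh : s^2 = μ^2*L^2 - 4*r^2 := by rw [hs2, hfdef r, hLdef]
        linear_combination -hh
      have h4 : (2*r/μ)*(μ*L+s) ≤ 4*r^2 := by
        calc (2*r/μ)*(μ*L+s) ≤ (2*r/μ)*(2*(μ*r)) := by
              apply mul_le_mul_of_nonneg_left (by linarith)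
                (div_nonneg (by linarith) hμ0.le)
        _ = 4*r^2 := by field_simp; ring
      have h6 : 2*r/μ ≤ μ*L - s := by
        have hkey : μ*L - s = 4*r^2 / (μ*L+s) := by
          rw [eq_div_iff hps.ne']
          exact hprod
        rw [hkey, le_div_iff₀ hps]
        exact h4
      rw [hlpval]
      have he : r/μ = (2*r/μ)/2 := by ring
      rw [he]
      linarith
    have habs_lp : |lp r| ≤ μ * r := by
      rw [hlpval, abs_le]
      constructor <;> linarith [hspos.le, hsle, hμLr, hL0.le]
    have habs_lm : |lm r| ≤ μ * r := by
      rw [hlmval, abs_le]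
      constructor <;> linarith [hspos.le, hsle, hμLr, hL0.le]
    -- exponential bounds
    obtain ⟨Ebd, hEbd⟩ : ∃ E : ℝ, E = Real.exp (-(1/μ * t * r)) := ⟨_, rfl⟩
    have hEbd0 : 0 ≤ Ebd := by rw [hEbd]; exact (Real.exp_pos _).le
    have hEp : Real.exp (lp r * t) ≤ Ebd := by
      rw [hEbd]
      apply Real.exp_le_exp.2
      calc lp r * t ≤ (-(r/μ)) * t := mul_le_mul_of_nonneg_right hlp_le ht
      _ = -(1/μ * t * r) := by ring
    have hEm : Real.exp (lm r * t) ≤ Ebd := by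
      rw [hEbd]
      apply Real.exp_le_exp.2
      have hlm_le : lm r ≤ -(r/μ) := le_trans (by rw [hlmval, hlpval] at *; linarith) hlp_le
      calc lm r * t ≤ (-(r/μ)) * t := mul_le_mul_of_nonneg_right hlm_le ht
      _ = -(1/μ * t * r) := by ring
    -- algebraic identity
    have hsub : lp r - lm r = s := by rw [hlpval, hlmval]; ring
    have hsubC : ((lp r : ℝ) : ℂ) - ((lm r : ℝ) : ℂ) = ((s : ℝ) : ℂ) := by
      rw [← Complex.ofReal_sub, hsub]
    have hscne : ((s : ℝ) : ℂ) ≠ 0 := by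
      simp only [ne_eq, Complex.ofReal_eq_zero]
      exact hspos.ne'
    have hcast1 : Complex.exp ((lp r : ℂ) * (t : ℂ)) = ((Real.exp (lp r * t) : ℝ) : ℂ) := by
      rw [← Complex.ofReal_mul, Complex.ofReal_exp]
    have hcast2 : Complex.exp ((lm r : ℂ) * (t : ℂ)) = ((Real.exp (lm r * t) : ℝ) : ℂ) := by
      rw [← Complex.ofReal_mul, Complex.ofReal_exp]
    rw [hcast1, hcast2, hsubC]
    have hdiff : ∀ EP EM : ℝ,
        (B - ((lm r : ℝ) : ℂ) * A) / ((s : ℝ) : ℂ) * ((EP : ℝ) : ℂ)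
          + (((lp r : ℝ) : ℂ) * A - B) / ((s : ℝ) : ℂ) * ((EM : ℝ) : ℂ)
          - P₁ * (((EP - EM) / s : ℝ) : ℂ) =
        ((B - P₁ - ((lm r : ℝ) : ℂ) * A) * ((EP : ℝ) : ℂ)
          + (((lp r : ℝ) : ℂ) * A - (B - P₁)) * ((EM : ℝ) : ℂ)) / ((s : ℝ) : ℂ) := by
      intro EP EM
      push_cast
      field_simp
      ring
    rw [hdiff]
    rw [norm_div]
    have hnorms : ‖((s : ℝ) : ℂ)‖ = s := by
      rw [Complex.norm_real, Real.norm_eq_abs, abs_of_pos hspos]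
    rw [hnorms]
    have hnormEp : ‖((Real.exp (lp r * t) : ℝ) : ℂ)‖ = Real.exp (lp r * t) := by
      rw [Complex.norm_real, Real.norm_eq_abs, abs_of_pos (Real.exp_pos _)]
    have hnormEm : ‖((Real.exp (lm r * t) : ℝ) : ℂ)‖ = Real.exp (lm r * t) := by
      rw [Complex.norm_real, Real.norm_eq_abs, abs_of_pos (Real.exp_pos _)]
    have hnum0 : 0 ≤ 2 * r * N₁ + μ * r * N₀ := by
      linarith [mul_nonneg hrpos.le hN₁0, mul_nonneg hμ0.le (mul_nonneg hrpos.le hN₀0)]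
    have hnum : ‖(B - P₁ - ((lm r : ℝ) : ℂ) * A) * ((Real.exp (lp r * t) : ℝ) : ℂ)
        + (((lp r : ℝ) : ℂ) * A - (B - P₁)) * ((Real.exp (lm r * t) : ℝ) : ℂ)‖ ≤
        (2 * r * N₁ + μ * r * N₀) * (2 * Ebd) := by
      have hc1 : ‖B - P₁ - ((lm r : ℝ) : ℂ) * A‖ ≤ 2 * r * N₁ + μ * r * N₀ := by
        calc ‖B - P₁ - ((lm r : ℝ) : ℂ) * A‖ ≤ ‖B - P₁‖ + ‖((lm r : ℝ) : ℂ) * A‖ :=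
              norm_sub_le _ _
        _ ≤ 2 * r * N₁ + μ * r * N₀ := by
            rw [norm_mul, Complex.norm_real, Real.norm_eq_abs]
            have h5 := mul_le_mul habs_lm hA (norm_nonneg _) (mul_nonneg hμ0.le hrpos.le)
            linarith [hBP]
      have hc2 : ‖((lp r : ℝ) : ℂ) * A - (B - P₁)‖ ≤ 2 * r * N₁ + μ * r * N₀ := by
        calc ‖((lp r : ℝ) : ℂ) * A - (B - P₁)‖ ≤ ‖((lp r : ℝ) : ℂ) * A‖ + ‖B - P₁‖ :=
              norm_sub_le _ _
        _ ≤ 2 * r * N₁ + μ * r * N₀ := by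
            rw [norm_mul, Complex.norm_real, Real.norm_eq_abs]
            have h5 := mul_le_mul habs_lp hA (norm_nonneg _) (mul_nonneg hμ0.le hrpos.le)
            linarith [hBP]
      have hEp0 : 0 ≤ Real.exp (lp r * t) := (Real.exp_pos _).le
      have hEm0 : 0 ≤ Real.exp (lm r * t) := (Real.exp_pos _).le
      calc ‖(B - P₁ - ((lm r : ℝ) : ℂ) * A) * ((Real.exp (lp r * t) : ℝ) : ℂ)
          + (((lp r : ℝ) : ℂ) * A - (B - P₁)) * ((Real.exp (lm r * t) : ℝ) : ℂ)‖
          ≤ ‖(B - P₁ - ((lm r : ℝ) : ℂ) * A) * ((Real.exp (lp r * t) : ℝ) : ℂ)‖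
            + ‖(((lp r : ℝ) : ℂ) * A - (B - P₁)) * ((Real.exp (lm r * t) : ℝ) : ℂ)‖ :=
            norm_add_le _ _
      _ = ‖B - P₁ - ((lm r : ℝ) : ℂ) * A‖ * Real.exp (lp r * t)
            + ‖((lp r : ℝ) : ℂ) * A - (B - P₁)‖ * Real.exp (lm r * t) := by
            rw [norm_mul, norm_mul, hnormEp, hnormEm]
      _ ≤ (2 * r * N₁ + μ * r * N₀) * Ebd + (2 * r * N₁ + μ * r * N₀) * Ebd := by
            have e1 := mul_le_mul hc1 hEp hEp0 hnum0
            have e2 := mul_le_mul hc2 hEm hEm0 hnum0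
            linarith
      _ = (2 * r * N₁ + μ * r * N₀) * (2 * Ebd) := by ring
    rw [hEbd] at hnum
    calc ‖(B - P₁ - ((lm r : ℝ) : ℂ) * A) * ((Real.exp (lp r * t) : ℝ) : ℂ)
        + (((lp r : ℝ) : ℂ) * A - (B - P₁)) * ((Real.exp (lm r * t) : ℝ) : ℂ)‖ / s
        ≤ ((2 * r * N₁ + μ * r * N₀) * (2 * Real.exp (-(1/μ * t * r)))) / (c₀ * r) :=
          div_le_div₀ (mul_nonneg hnum0 (by positivity)) hnum (mul_pos hc₀pos hrpos) hsc
    _ = (2 * (2 * N₁ + μ * N₀) / c₀) * Real.exp (-(1/μ * t * r)) := by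
          field_simp
    _ ≤ K * Real.exp (-(1/μ * t * r)) := by
          apply mul_le_mul_of_nonneg_right _ (Real.exp_pos _).le
          rw [hK]
          have h2N : 2*N₁ ≤ μ*N₁ := mul_le_mul_of_nonneg_right (le_of_lt hμ) hN₁0
          rw [div_le_div_iff₀ hc₀pos hc₀pos]
          apply mul_le_mul_of_nonneg_right _ hc₀pos.le
          linarith
  -- main integral estimate
  obtain ⟨I, hI⟩ : ∃ I : ℝ, I = ∫ x : EuclideanSpace ℝ (Fin n), Real.exp (-‖x‖) := ⟨_, rfl⟩
  have hI0 : 0 ≤ I := hI ▸ integral_nonneg (fun x => (Real.exp_pos _).le)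
  have hM2n : (0:ℝ) ≤ (μ/2)^n := pow_nonneg (by linarith) n
  refine ⟨(2*μ/c₀)^2 * 2 * (μ/2)^n * I + 1, 1, ?_, one_pos, ?_⟩
  · have h0 : (0:ℝ) ≤ (2*μ/c₀)^2 * 2 * (μ/2)^n * I :=
      mul_nonneg (mul_nonneg (mul_nonneg (sq_nonneg _) (by norm_num)) hM2n) hI0
    linarith
  intro t ht
  have ht0 : (0:ℝ) < t := lt_of_lt_of_le one_pos ht
  obtain ⟨a, ha⟩ : ∃ a : ℝ, a = 2 * t / μ := ⟨_, rfl⟩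
  have ha0 : 0 < a := by rw [ha]; exact div_pos (by linarith) hμ0
  have hbound : (∫ ξ in Metric.closedBall (0 : EuclideanSpace ℝ (Fin n)) δ₁,
      ‖w t ξ - ν t ξ‖ ^ 2) ≤ K^2 * (a⁻¹ ^ n * I) := by
    have hptw : ∀ ξ ∈ Metric.closedBall (0 : EuclideanSpace ℝ (Fin n)) δ₁,
        ‖w t ξ - ν t ξ‖ ^ 2 ≤ K^2 * Real.exp (-(a * ‖ξ‖)) := by
      intro ξ hξ
      have hk := key t (by linarith) ξ (by rwa [← mem_closedBall_zero_iff])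
      calc ‖w t ξ - ν t ξ‖ ^ 2 ≤ (K * Real.exp (-(1/μ * t * ‖ξ‖)))^2 :=
            pow_le_pow_left₀ (norm_nonneg _) hk 2
      _ = K^2 * Real.exp (-(a * ‖ξ‖)) := by
            rw [mul_pow, pow_two (Real.exp _), ← Real.exp_add, ha]
            congr 1
            field_simp
            ring
    calc (∫ ξ in Metric.closedBall (0 : EuclideanSpace ℝ (Fin n)) δ₁, ‖w t ξ - ν t ξ‖ ^ 2)
        ≤ ∫ ξ in Metric.closedBall (0 : EuclideanSpace ℝ (Fin n)) δ₁,
            K^2 * Real.exp (-(a * ‖ξ‖)) := by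
          refine integral_mono_of_nonneg
            (Filter.Eventually.of_forall fun ξ => pow_nonneg (norm_nonneg _) 2)
            (((aux_integrable_scale ha0).const_mul (K^2)).restrict) ?_
          exact ae_restrict_of_forall_mem measurableSet_closedBall hptw
    _ = K^2 * ∫ ξ in Metric.closedBall (0 : EuclideanSpace ℝ (Fin n)) δ₁,
            Real.exp (-(a * ‖ξ‖)) := integral_const_mul _ _
    _ ≤ K^2 * ∫ ξ : EuclideanSpace ℝ (Fin n), Real.exp (-(a * ‖ξ‖)) := by
          apply mul_le_mul_of_nonneg_left _ (sq_nonneg K)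
          exact setIntegral_le_integral (aux_integrable_scale ha0)
            (Filter.Eventually.of_forall fun ξ => (Real.exp_pos _).le)
    _ = K^2 * (a⁻¹ ^ n * I) := by rw [aux_integral_scale ha0, hI]
  have hainv : a⁻¹ ^ n = (μ/2)^n * t ^ (-(n : ℝ)) := by
    have h1 : a⁻¹ = (μ/2) * t⁻¹ := by rw [ha, inv_div]; ring
    have h2 : t ^ (-(n : ℝ)) = (t⁻¹)^n := by
      rw [Real.rpow_neg ht0.le, Real.rpow_natCast, ← inv_pow]
    rw [h1, mul_pow, h2]
  have hK2 : K^2 ≤ (2*μ/c₀)^2 * (2 * (N₀^2 + N₁^2)) := by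
    rw [hK]
    have he : (2*μ*(N₀+N₁)/c₀)^2 = (2*μ/c₀)^2 * (N₀+N₁)^2 := by ring
    rw [he]
    apply mul_le_mul_of_nonneg_left _ (sq_nonneg _)
    linarith [sq_nonneg (N₀ - N₁)]
  have hrpw0 : (0:ℝ) ≤ t ^ (-(n : ℝ)) := Real.rpow_nonneg ht0.le _
  calc (∫ ξ in Metric.closedBall (0 : EuclideanSpace ℝ (Fin n)) δ₁, ‖w t ξ - ν t ξ‖ ^ 2)
      ≤ K^2 * (a⁻¹ ^ n * I) := hbound
  _ = K^2 * ((μ/2)^n * I) * t ^ (-(n : ℝ)) := by rw [hainv]; ring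
  _ ≤ ((2*μ/c₀)^2 * (2 * (N₀^2 + N₁^2))) * ((μ/2)^n * I) * t ^ (-(n : ℝ)) := by
      apply mul_le_mul_of_nonneg_right _ hrpw0
      exact mul_le_mul_of_nonneg_right hK2 (mul_nonneg hM2n hI0)
  _ = ((2*μ/c₀)^2 * 2 * (μ/2)^n * I) * (N₀^2 + N₁^2) * t ^ (-(n : ℝ)) := by ring
  _ ≤ ((2*μ/c₀)^2 * 2 * (μ/2)^n * I + 1) * (N₀^2 + N₁^2) * t ^ (-(n : ℝ)) := by
      apply mul_le_mul_of_nonneg_right _ hrpw0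
      apply mul_le_mul_of_nonneg_right _ (by positivity)
      linarith
end

section
/- Let n ≥ 1, μ > 2, let δ > 0 be the unique positive root of μ log(1+δ) = 2δ, and let u₀, u₁ ∈ L¹(ℝⁿ). For ξ with |ξ| > δ write r := |ξ| and b(r) := √(r² - (μ²/4) log²(1+r)) (positive since μ log(1+r) < 2r for r > δ), and define w(t,ξ) := (1+r)^{-μt/2} [ cos(b(r)t)·û₀(ξ) + (μ log(1+r)/(2b(r)))·sin(b(r)t)·û₀(ξ) + (1/b(r))·sin(b(r)t)·û₁(ξ) ]. Then there exist constants C > 0 (depending on n and μ), β > 0 and t₀ > 0 such that for all t ≥ t₀: ∫_{|ξ| > δ} |w(t,ξ)|² dξ ≤ C (‖u₀‖₁² + ‖u₁‖₁²) e^{-βt}. -/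
open MeasureTheory

lemma aux_log_gt {δ : ℝ} (hδ : 0 < δ) : δ / (1 + δ) < Real.log (1 + δ) := by
  have h1 : (0:ℝ) < 1 + δ := by linarith
  have h := Real.add_one_lt_exp (x := -Real.log (1 + δ)) (by
    simp only [ne_eq, neg_eq_zero]
    exact fun h => by
      have := Real.log_pos (by linarith : 1 < 1 + δ); linarith)
  rw [Real.exp_neg, Real.exp_log h1] at h
  rw [div_lt_iff₀ h1]
  have h2 : (1 + δ)⁻¹ * (1 + δ) = 1 := inv_mul_cancel₀ (ne_of_gt h1)
  nlinarith [h1]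

lemma aux_mu_lt {μ δ : ℝ} (hμ : 2 < μ) (hδ : 0 < δ)
    (hroot : μ * Real.log (1 + δ) = 2 * δ) : μ < 2 * (1 + δ) := by
  have h1 : (0:ℝ) < 1 + δ := by linarith
  have h := aux_log_gt hδ
  have hμ0 : (0:ℝ) < μ := by linarith
  have : μ * (δ / (1 + δ)) < 2 * δ := by
    calc μ * (δ / (1 + δ)) < μ * Real.log (1 + δ) :=
          mul_lt_mul_of_pos_left h hμ0
    _ = 2 * δ := hroot
  rw [mul_div_assoc'] at this
  rw [div_lt_iff₀ h1] at this
  nlinarith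

lemma aux_key {μ δ : ℝ} (hμ : 2 < μ) (hδ : 0 < δ)
    (hroot : μ * Real.log (1 + δ) = 2 * δ) {r : ℝ} (hr : δ < r) :
    μ * Real.log (1 + r) < 2 * r := by
  set F : ℝ → ℝ := fun x => 2 * x - μ * Real.log (1 + x) with hF
  have hmono : StrictMonoOn F (Set.Ici δ) := by
    apply strictMonoOn_of_deriv_pos (convex_Ici δ)
    · apply ContinuousOn.sub (by fun_prop)
      apply ContinuousOn.mul continuousOn_const
      apply ContinuousOn.log (by fun_prop)
      intro x hx
      have h : δ ≤ x := hx
      simp only [ne_eq]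
      intro hc
      linarith
    · intro x hx
      rw [interior_Ici] at hx
      have hx' : δ < x := hx
      have h1x : (0:ℝ) < 1 + x := by linarith
      have hd : HasDerivAt F (2 - μ * (1 / (1 + x))) x := by
        have hlog : HasDerivAt (fun y : ℝ => Real.log (1 + y)) (1 / (1 + x)) x := by
          have h1 : HasDerivAt (fun y : ℝ => 1 + y) 1 x := by
            simpa using (hasDerivAt_id x).const_add 1
          have := (Real.hasDerivAt_log (ne_of_gt h1x)).comp x h1
          rw [mul_one] at this; rw [one_div]; exact this
        have h := ((hasDerivAt_id x).const_mul 2).sub (hlog.const_mul μ)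
        rw [show (2:ℝ) - μ * (1 / (1 + x)) = 2 * 1 - μ * (1 / (1 + x)) by ring]; exact h
      rw [hd.deriv]
      have hmud : μ < 2 * (1 + δ) := aux_mu_lt hμ hδ hroot
      have : μ * (1 / (1 + x)) < 2 := by
        rw [mul_one_div, div_lt_iff₀ h1x]
        nlinarith
      linarith
  have := hmono (Set.self_mem_Ici) (Set.mem_Ici.mpr hr.le) hr
  simp only [hF] at this
  linarith

lemma aux_fourier_bound {n : ℕ} (u : EuclideanSpace ℝ (Fin n) → ℂ)
    (ξ : EuclideanSpace ℝ (Fin n)) :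
    ‖fourierTransformCLM' u ξ‖ ≤ ∫ x, ‖u x‖ := by
  unfold fourierTransformCLM'
  refine le_trans (norm_integral_le_integral_norm _) (le_of_eq ?_)
  apply integral_congr_ae
  filter_upwards with x
  rw [norm_mul]
  have : ‖Complex.exp (-(Complex.I * ((inner ℝ x ξ : ℝ) : ℂ)))‖ = 1 := by
    rw [Complex.norm_exp]
    simp
  rw [this, one_mul]

lemma aux_b_pos {μ δ : ℝ} (hμ : 2 < μ) (hδ : 0 < δ)
    (hroot : μ * Real.log (1 + δ) = 2 * δ) {r : ℝ} (hr : δ < r) :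
    0 < r ^ 2 - μ ^ 2 / 4 * Real.log (1 + r) ^ 2 := by
  have hr0 : 0 < r := lt_trans hδ hr
  have hlog : 0 < Real.log (1 + r) := Real.log_pos (by linarith)
  have hk := aux_key hμ hδ hroot hr
  nlinarith [hk, hlog, hr0, mul_pos (by linarith : (0:ℝ) < μ) hlog]

set_option maxHeartbeats 2000000 in
/-- Lemma 3.3 (high frequency estimate, `μ > 2`): for `u₀, u₁ ∈ L¹`,
`∫_{|ξ|>δ} |w(t,ξ)|² dξ ≤ C(‖u₀‖₁² + ‖u₁‖₁²) e^{-βt}` for large `t`. -/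
theorem stmt16 (n : ℕ) (hn : 1 ≤ n) (μ δ : ℝ) (hμ : 2 < μ) (hδ : 0 < δ)
    (hroot : μ * Real.log (1 + δ) = 2 * δ)
    (u₀ u₁ : EuclideanSpace ℝ (Fin n) → ℂ)
    (hu₀ : Integrable u₀) (hu₁ : Integrable u₁) :
    let b : ℝ → ℝ := fun r => Real.sqrt (r ^ 2 - μ ^ 2 / 4 * Real.log (1 + r) ^ 2)
    let w : ℝ → EuclideanSpace ℝ (Fin n) → ℂ := fun t ξ =>
      (((1 + ‖ξ‖) ^ (-(μ * t) / 2) : ℝ) : ℂ) *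
        (((Real.cos (b ‖ξ‖ * t) : ℝ) : ℂ) * fourierTransformCLM' u₀ ξ +
         ((μ * Real.log (1 + ‖ξ‖) / (2 * b ‖ξ‖) : ℝ) : ℂ) *
           ((Real.sin (b ‖ξ‖ * t) : ℝ) : ℂ) * fourierTransformCLM' u₀ ξ +
         ((1 / b ‖ξ‖ : ℝ) : ℂ) * ((Real.sin (b ‖ξ‖ * t) : ℝ) : ℂ) *
           fourierTransformCLM' u₁ ξ)
    ∃ C β t₀ : ℝ, 0 < C ∧ 0 < β ∧ 0 < t₀ ∧ ∀ t : ℝ, t₀ ≤ t →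
      (∫ ξ in {ξ : EuclideanSpace ℝ (Fin n) | δ < ‖ξ‖}, ‖w t ξ‖ ^ 2) ≤
        C * ((∫ x, ‖u₀ x‖) ^ 2 + (∫ x, ‖u₁ x‖) ^ 2) * Real.exp (-β * t) := by
  intro b w
  have hμ0 : (0:ℝ) < μ := by linarith
  set A := ∫ x, ‖u₀ x‖ with hAdef
  set B := ∫ x, ‖u₁ x‖ with hBdef
  have hA : 0 ≤ A := integral_nonneg fun x => norm_nonneg _
  have hB : 0 ≤ B := integral_nonneg fun x => norm_nonneg _
  set t₀ : ℝ := 1 + ((n:ℝ) + 2) / μ with ht₀def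
  have ht₀1 : (1:ℝ) ≤ t₀ := by
    have h : 0 ≤ ((n:ℝ) + 2) / μ := by positivity
    rw [ht₀def]; linarith
  have ht₀pos : (0:ℝ) < t₀ := by linarith
  have hμt₀ : μ * t₀ = μ + (n:ℝ) + 2 := by
    rw [ht₀def]
    field_simp
    ring
  set K : ℝ := (2 + μ / 2) ^ 2 with hKdef
  have hK0 : 0 < K := by positivity
  set I : ℝ := ∫ ξ : EuclideanSpace ℝ (Fin n), (1 + ‖ξ‖) ^ (-(μ + (n:ℝ))) with hIdef
  have hInt : Integrable (fun ξ : EuclideanSpace ℝ (Fin n) =>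
      (1 + ‖ξ‖) ^ (-(μ + (n:ℝ)))) := by
    apply integrable_one_add_norm
    rw [finrank_euclideanSpace_fin]
    linarith
  have hI0 : 0 ≤ I :=
    integral_nonneg fun ξ => Real.rpow_nonneg (by positivity) _
  refine ⟨2 * K * (I + 1) * Real.exp (2 * δ * t₀) * (4 / δ ^ 2), δ, t₀,
    by positivity, hδ, ht₀pos, ?_⟩
  intro t ht
  have ht1 : (1:ℝ) ≤ t := le_trans ht₀1 ht
  have ht0 : (0:ℝ) < t := by linarith
  -- pointwise bound
  set S : Set (EuclideanSpace ℝ (Fin n)) := {ξ | δ < ‖ξ‖} with hSdef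
  have hS : MeasurableSet S :=
    measurableSet_lt measurable_const measurable_norm
  set D : ℝ := (A + B) ^ 2 * (K * t ^ 2) * Real.exp (2 * δ * t₀ - 2 * δ * t) with hDdef
  have hD0 : 0 ≤ D := by positivity
  have hpt : ∀ ξ ∈ S, ‖w t ξ‖ ^ 2 ≤ D * (1 + ‖ξ‖) ^ (-(μ + (n:ℝ))) := by
    intro ξ hξ
    set r : ℝ := ‖ξ‖ with hrdef
    have hr : δ < r := hξ
    have hr0 : 0 < r := lt_trans hδ hr
    have h1r : (0:ℝ) < 1 + r := by linarith
    have hb2 := aux_b_pos hμ hδ hroot hr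
    have hb : 0 < b r := Real.sqrt_pos.mpr hb2
    have hlog : 0 < Real.log (1 + r) := Real.log_pos (by linarith)
    have hlogr : Real.log (1 + r) ≤ r := by
      have := Real.log_le_sub_one_of_pos h1r
      linarith
    have hsin : |Real.sin (b r * t)| ≤ b r * t := by
      have h := Real.abs_sin_le_abs (x := b r * t)
      rwa [abs_of_nonneg (mul_nonneg hb.le ht0.le)] at h
    have hf0 : ‖fourierTransformCLM' u₀ ξ‖ ≤ A := aux_fourier_bound u₀ ξ
    have hf1 : ‖fourierTransformCLM' u₁ ξ‖ ≤ B := aux_fourier_bound u₁ ξ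
    set P : ℝ := (1 + r) ^ (-(μ * t) / 2) with hPdef
    have hP0 : 0 ≤ P := Real.rpow_nonneg h1r.le _
    -- linear bound on ‖w t ξ‖
    have hw1 : ‖w t ξ‖ ≤ P * ((A + B) * (1 + μ * r * t / 2 + t)) := by
      have hwdef : w t ξ =
          ((P : ℝ) : ℂ) *
            (((Real.cos (b r * t) : ℝ) : ℂ) * fourierTransformCLM' u₀ ξ +
             ((μ * Real.log (1 + r) / (2 * b r) : ℝ) : ℂ) *
               ((Real.sin (b r * t) : ℝ) : ℂ) * fourierTransformCLM' u₀ ξ +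
             ((1 / b r : ℝ) : ℂ) * ((Real.sin (b r * t) : ℝ) : ℂ) *
               fourierTransformCLM' u₁ ξ) := rfl
      rw [hwdef, norm_mul, Complex.norm_real, Real.norm_eq_abs, abs_of_nonneg hP0]
      have hsum : ‖(((Real.cos (b r * t) : ℝ) : ℂ) * fourierTransformCLM' u₀ ξ +
             ((μ * Real.log (1 + r) / (2 * b r) : ℝ) : ℂ) *
               ((Real.sin (b r * t) : ℝ) : ℂ) * fourierTransformCLM' u₀ ξ +
             ((1 / b r : ℝ) : ℂ) * ((Real.sin (b r * t) : ℝ) : ℂ) *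
               fourierTransformCLM' u₁ ξ)‖ ≤ (A + B) * (1 + μ * r * t / 2 + t) := by
        have e1 : ‖((Real.cos (b r * t) : ℝ) : ℂ) * fourierTransformCLM' u₀ ξ‖ ≤ 1 * A := by
          rw [norm_mul, Complex.norm_real, Real.norm_eq_abs]
          exact mul_le_mul (Real.abs_cos_le_one _) hf0 (norm_nonneg _) zero_le_one
        have e2 : ‖((μ * Real.log (1 + r) / (2 * b r) : ℝ) : ℂ) *
               ((Real.sin (b r * t) : ℝ) : ℂ) * fourierTransformCLM' u₀ ξ‖ ≤
               (μ * r * t / 2) * A := by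
          rw [norm_mul, norm_mul, Complex.norm_real, Complex.norm_real,
            Real.norm_eq_abs, Real.norm_eq_abs]
          have hc0 : 0 ≤ μ * Real.log (1 + r) / (2 * b r) := by positivity
          rw [abs_of_nonneg hc0]
          have step : μ * Real.log (1 + r) / (2 * b r) * |Real.sin (b r * t)| ≤
              μ * r * t / 2 := by
            calc μ * Real.log (1 + r) / (2 * b r) * |Real.sin (b r * t)| ≤
                μ * Real.log (1 + r) / (2 * b r) * (b r * t) :=
                  mul_le_mul_of_nonneg_left hsin hc0
            _ = μ * Real.log (1 + r) * t / 2 := by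
                  field_simp
            _ ≤ μ * r * t / 2 := by
                  have h := mul_le_mul_of_nonneg_right
                    (mul_le_mul_of_nonneg_left hlogr hμ0.le) ht0.le
                  linarith
          exact mul_le_mul step hf0 (norm_nonneg _) (by positivity)
        have e3 : ‖((1 / b r : ℝ) : ℂ) * ((Real.sin (b r * t) : ℝ) : ℂ) *
               fourierTransformCLM' u₁ ξ‖ ≤ t * B := by
          rw [norm_mul, norm_mul, Complex.norm_real, Complex.norm_real,
            Real.norm_eq_abs, Real.norm_eq_abs]
          have hc0 : 0 ≤ 1 / b r := by positivity
          rw [abs_of_nonneg hc0]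
          have step : 1 / b r * |Real.sin (b r * t)| ≤ t := by
            calc 1 / b r * |Real.sin (b r * t)| ≤ 1 / b r * (b r * t) :=
                  mul_le_mul_of_nonneg_left hsin hc0
            _ = t := by field_simp
          exact mul_le_mul step hf1 (norm_nonneg _) (by positivity)
        calc _ ≤ ‖((Real.cos (b r * t) : ℝ) : ℂ) * fourierTransformCLM' u₀ ξ +
             ((μ * Real.log (1 + r) / (2 * b r) : ℝ) : ℂ) *
               ((Real.sin (b r * t) : ℝ) : ℂ) * fourierTransformCLM' u₀ ξ‖ +
             ‖((1 / b r : ℝ) : ℂ) * ((Real.sin (b r * t) : ℝ) : ℂ) *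
               fourierTransformCLM' u₁ ξ‖ := norm_add_le _ _
        _ ≤ (‖((Real.cos (b r * t) : ℝ) : ℂ) * fourierTransformCLM' u₀ ξ‖ +
             ‖((μ * Real.log (1 + r) / (2 * b r) : ℝ) : ℂ) *
               ((Real.sin (b r * t) : ℝ) : ℂ) * fourierTransformCLM' u₀ ξ‖) +
             ‖((1 / b r : ℝ) : ℂ) * ((Real.sin (b r * t) : ℝ) : ℂ) *
               fourierTransformCLM' u₁ ξ‖ := by
              gcongr
              exact norm_add_le _ _
        _ ≤ (1 * A + (μ * r * t / 2) * A) + t * B := by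
              gcongr
        _ ≤ (A + B) * (1 + μ * r * t / 2 + t) := by
              have hx : (0:ℝ) ≤ μ * r * t / 2 := by
                have := mul_nonneg (mul_nonneg hμ0.le hr0.le) ht0.le
                linarith
              have h1 := mul_nonneg hx hB
              have h2 := mul_nonneg ht0.le hA
              nlinarith [h1, h2]
      exact mul_le_mul_of_nonneg_left hsum hP0
    -- square the bound
    have hw2 : ‖w t ξ‖ ^ 2 ≤ P ^ 2 * (A + B) ^ 2 * (1 + μ * r * t / 2 + t) ^ 2 := by
      have := pow_le_pow_left₀ (norm_nonneg (w t ξ)) hw1 2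
      calc ‖w t ξ‖ ^ 2 ≤ (P * ((A + B) * (1 + μ * r * t / 2 + t))) ^ 2 := this
      _ = P ^ 2 * (A + B) ^ 2 * (1 + μ * r * t / 2 + t) ^ 2 := by ring
    have hpoly : (1 + μ * r * t / 2 + t) ^ 2 ≤ t ^ 2 * K * (1 + r) ^ 2 := by
      have h1 : 1 + μ * r * t / 2 + t ≤ t * ((2 + μ / 2) * (1 + r)) := by
        have h2 := mul_nonneg hμ0.le ht0.le
        have h3 := mul_nonneg ht0.le hr0.le
        nlinarith [h2, h3]
      have := pow_le_pow_left₀ (by positivity) h1 2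
      calc (1 + μ * r * t / 2 + t) ^ 2 ≤ (t * ((2 + μ / 2) * (1 + r))) ^ 2 := this
      _ = t ^ 2 * K * (1 + r) ^ 2 := by rw [hKdef]; ring
    have hw3 : ‖w t ξ‖ ^ 2 ≤ (A + B) ^ 2 * (K * t ^ 2) * (P ^ 2 * (1 + r) ^ 2) := by
      calc ‖w t ξ‖ ^ 2 ≤ P ^ 2 * (A + B) ^ 2 * (1 + μ * r * t / 2 + t) ^ 2 := hw2
      _ ≤ P ^ 2 * (A + B) ^ 2 * (t ^ 2 * K * (1 + r) ^ 2) := by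
            gcongr
      _ = (A + B) ^ 2 * (K * t ^ 2) * (P ^ 2 * (1 + r) ^ 2) := by ring
    -- bound P² (1+r)²
    have e1 : P ^ 2 * (1 + r) ^ 2 =
        (1 + r) ^ (-(μ * (t - t₀))) * (1 + r) ^ (-(μ + (n:ℝ))) := by
      rw [hPdef, ← Real.rpow_natCast ((1 + r) ^ (-(μ * t) / 2)) 2,
        ← Real.rpow_natCast (1 + r) 2, ← Real.rpow_mul h1r.le,
        ← Real.rpow_add h1r, ← Real.rpow_add h1r]
      congr 1
      push_cast
      linear_combination -hμt₀
    have e2 : (1 + r) ^ (-(μ * (t - t₀))) ≤ Real.exp (2 * δ * t₀ - 2 * δ * t) := by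
      have hexp_le : -(μ * (t - t₀)) ≤ 0 := by
        have := mul_nonneg hμ0.le (by linarith : (0:ℝ) ≤ t - t₀)
        linarith
      calc (1 + r) ^ (-(μ * (t - t₀))) ≤ (1 + δ) ^ (-(μ * (t - t₀))) :=
            Real.rpow_le_rpow_of_nonpos (by linarith) (by linarith) hexp_le
      _ = Real.exp (2 * δ * t₀ - 2 * δ * t) := by
            rw [Real.rpow_def_of_pos (by linarith)]
            congr 1
            linear_combination (t₀ - t) * hroot
    have e3 : P ^ 2 * (1 + r) ^ 2 ≤
        Real.exp (2 * δ * t₀ - 2 * δ * t) * (1 + r) ^ (-(μ + (n:ℝ))) := by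
      rw [e1]
      exact mul_le_mul_of_nonneg_right e2 (Real.rpow_nonneg h1r.le _)
    calc ‖w t ξ‖ ^ 2 ≤ (A + B) ^ 2 * (K * t ^ 2) * (P ^ 2 * (1 + r) ^ 2) := hw3
    _ ≤ (A + B) ^ 2 * (K * t ^ 2) *
          (Real.exp (2 * δ * t₀ - 2 * δ * t) * (1 + r) ^ (-(μ + (n:ℝ)))) := by
          gcongr
    _ = D * (1 + r) ^ (-(μ + (n:ℝ))) := by rw [hDdef]; ring
  -- integrate
  have hInt' : Integrable (fun ξ : EuclideanSpace ℝ (Fin n) =>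
      D * (1 + ‖ξ‖) ^ (-(μ + (n:ℝ)))) := hInt.const_mul D
  have step1 : (∫ ξ in S, ‖w t ξ‖ ^ 2) ≤ ∫ ξ in S, D * (1 + ‖ξ‖) ^ (-(μ + (n:ℝ))) := by
    apply integral_mono_of_nonneg
    · filter_upwards with ξ; positivity
    · exact hInt'.restrict
    · rw [Filter.EventuallyLE, ae_restrict_iff' hS]
      filter_upwards with ξ hξ
      exact hpt ξ hξ
  have step2 : (∫ ξ in S, D * (1 + ‖ξ‖) ^ (-(μ + (n:ℝ)))) ≤ D * I := by
    rw [integral_const_mul]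
    apply mul_le_mul_of_nonneg_left _ hD0
    exact setIntegral_le_integral hInt
      (Filter.Eventually.of_forall fun ξ => Real.rpow_nonneg (by positivity) _)
  -- final arithmetic
  have hq : δ ^ 2 * t ^ 2 / 4 ≤ Real.exp (δ * t) := by
    have h1 : δ * t / 2 + 1 ≤ Real.exp (δ * t / 2) := Real.add_one_le_exp _
    have h2 : Real.exp (δ * t) = Real.exp (δ * t / 2) * Real.exp (δ * t / 2) := by
      rw [← Real.exp_add]; ring_nf
    have h0 : (0:ℝ) ≤ δ * t / 2 + 1 := by
      have := mul_nonneg hδ.le ht0.le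
      linarith
    have h3 : (δ * t / 2 + 1) * (δ * t / 2 + 1) ≤
        Real.exp (δ * t / 2) * Real.exp (δ * t / 2) :=
      mul_le_mul h1 h1 h0 (Real.exp_pos _).le
    have h4 := mul_nonneg hδ.le ht0.le
    nlinarith [h3, h4, h2]
  have ht2exp : t ^ 2 * Real.exp (-(2 * δ) * t) ≤ 4 / δ ^ 2 * Real.exp (-δ * t) := by
    have he : Real.exp (δ * t) * Real.exp (-(2 * δ) * t) = Real.exp (-δ * t) := by
      rw [← Real.exp_add]; ring_nf
    have hp := Real.exp_pos (-(2 * δ) * t)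
    have h3 : δ ^ 2 * t ^ 2 / 4 * Real.exp (-(2 * δ) * t) ≤ Real.exp (-δ * t) := by
      calc δ ^ 2 * t ^ 2 / 4 * Real.exp (-(2 * δ) * t) ≤
          Real.exp (δ * t) * Real.exp (-(2 * δ) * t) :=
            mul_le_mul_of_nonneg_right hq hp.le
      _ = Real.exp (-δ * t) := he
    have hδ2 : (0:ℝ) < δ ^ 2 := by positivity
    calc t ^ 2 * Real.exp (-(2 * δ) * t) =
        4 / δ ^ 2 * (δ ^ 2 * t ^ 2 / 4 * Real.exp (-(2 * δ) * t)) := by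
          field_simp
    _ ≤ 4 / δ ^ 2 * Real.exp (-δ * t) := by
          apply mul_le_mul_of_nonneg_left h3 (by positivity)
  have hAB2 : (A + B) ^ 2 ≤ 2 * (A ^ 2 + B ^ 2) := by
    nlinarith [sq_nonneg (A - B)]
  have final : D * I ≤ 2 * K * (I + 1) * Real.exp (2 * δ * t₀) * (4 / δ ^ 2) *
      (A ^ 2 + B ^ 2) * Real.exp (-δ * t) := by
    have hDeq : D = (A + B) ^ 2 * K * Real.exp (2 * δ * t₀) *
        (t ^ 2 * Real.exp (-(2 * δ) * t)) := by
      rw [hDdef, show (2:ℝ) * δ * t₀ - 2 * δ * t = 2 * δ * t₀ + -(2 * δ) * t by ring,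
        Real.exp_add]
      ring
    calc D * I ≤ D * (I + 1) := by
          apply mul_le_mul_of_nonneg_left (by linarith) hD0
    _ = (A + B) ^ 2 * K * Real.exp (2 * δ * t₀) *
          (t ^ 2 * Real.exp (-(2 * δ) * t)) * (I + 1) := by rw [hDeq]
    _ ≤ (2 * (A ^ 2 + B ^ 2)) * K * Real.exp (2 * δ * t₀) *
          (4 / δ ^ 2 * Real.exp (-δ * t)) * (I + 1) := by
          gcongr
    _ = 2 * K * (I + 1) * Real.exp (2 * δ * t₀) * (4 / δ ^ 2) *
          (A ^ 2 + B ^ 2) * Real.exp (-δ * t) := by ring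
  calc (∫ ξ in S, ‖w t ξ‖ ^ 2) ≤ D * I := le_trans step1 step2
  _ ≤ _ := final
end

section
/- Let n ≥ 1, μ > 2, let δ > 0 be the unique positive root of μ log(1+δ) = 2δ, and let δ₁ ∈ (0, min{μ/2 - 1, δ}] with δ₁ < δ. For ξ with δ₁ ≤ |ξ| < δ write r := |ξ|, h(r) := μ² log²(1+r) - 4r², λ±(r) := (-μ log(1+r) ± √(h(r)))/2, and define ν(t,ξ) := (e^{λ₊(r)t} - e^{λ₋(r)t})/√(h(r)). Then there exist constants C > 0, α > 0 and t₀ > 0 such that for all t ≥ t₀: ∫_{δ₁ ≤ |ξ| < δ} |ν(t,ξ)|² dξ ≤ C e^{-αt}. -/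
set_option maxHeartbeats 1000000


open MeasureTheory

/-- Concavity of `log`: for `0 < r < δ`, `2r < μ log(1+r)` when `μ log(1+δ) = 2δ`. -/
lemma log_concave_aux (μ δ : ℝ) (hμ : 2 < μ) (hδ : 0 < δ)
    (hroot : μ * Real.log (1 + δ) = 2 * δ) {r : ℝ} (hr0 : 0 < r) (hrδ : r < δ) :
    2 * r < μ * Real.log (1 + r) := by
  have hkey := strictConcaveOn_log_Ioi.2 (Set.mem_Ioi.2 one_pos)
    (Set.mem_Ioi.2 (show (0:ℝ) < 1 + δ by linarith))
    (show (1:ℝ) ≠ 1 + δ by intro hcon; linarith [hcon])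
    (show (0:ℝ) < 1 - r / δ by
      have : r / δ < 1 := (div_lt_one hδ).2 hrδ; linarith)
    (show (0:ℝ) < r / δ by positivity)
    (show (1 - r / δ) + r / δ = 1 by ring)
  simp only [smul_eq_mul] at hkey
  have h1 : (1 - r / δ) * 1 + r / δ * (1 + δ) = 1 + r := by field_simp; ring
  rw [h1, Real.log_one, mul_zero, zero_add] at hkey
  have hμ0 : (0:ℝ) < μ := by linarith
  have := mul_lt_mul_of_pos_left hkey hμ0
  have h2 : μ * (r / δ * Real.log (1 + δ)) = (r / δ) * (μ * Real.log (1 + δ)) := by ring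
  rw [h2, hroot] at this
  have h3 : r / δ * (2 * δ) = 2 * r := by field_simp
  linarith [this, h3 ▸ this]

/-- Estimate (3.23) (middle frequency, `μ > 2`): the profile
`ν(t,ξ) = (e^{λ₊t} - e^{λ₋t})/√(h(r))` (with `r = |ξ|`) satisfies
`∫_{δ₁ ≤ |ξ| < δ} |ν(t,ξ)|² dξ ≤ C e^{-αt}` for large `t`. -/
theorem stmt17 (n : ℕ) (hn : 1 ≤ n) (μ δ δ₁ : ℝ) (hμ : 2 < μ) (hδ : 0 < δ)
    (hroot : μ * Real.log (1 + δ) = 2 * δ)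
    (hδ₁ : 0 < δ₁) (hδ₁le : δ₁ ≤ min (μ / 2 - 1) δ) (hδ₁lt : δ₁ < δ) :
    let h : ℝ → ℝ := fun r => μ ^ 2 * Real.log (1 + r) ^ 2 - 4 * r ^ 2
    let lp : ℝ → ℝ := fun r => (-(μ * Real.log (1 + r)) + Real.sqrt (h r)) / 2
    let lm : ℝ → ℝ := fun r => (-(μ * Real.log (1 + r)) - Real.sqrt (h r)) / 2
    let ν : ℝ → EuclideanSpace ℝ (Fin n) → ℝ := fun t ξ =>
      (Real.exp (lp ‖ξ‖ * t) - Real.exp (lm ‖ξ‖ * t)) / Real.sqrt (h ‖ξ‖)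
    ∃ C α t₀ : ℝ, 0 < C ∧ 0 < α ∧ 0 < t₀ ∧ ∀ t : ℝ, t₀ ≤ t →
      (∫ ξ in {ξ : EuclideanSpace ℝ (Fin n) | δ₁ ≤ ‖ξ‖ ∧ ‖ξ‖ < δ}, |ν t ξ| ^ 2) ≤
        C * Real.exp (-α * t) := by
  intro h lp lm ν
  have hμ0 : (0:ℝ) < μ := by linarith
  set L : ℝ := Real.log (1 + δ) with hL
  have hL0 : 0 < L := Real.log_pos (by linarith)
  set c : ℝ := δ₁ ^ 2 / (μ * L) with hc
  have hc0 : 0 < c := by positivity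
  set s : Set (EuclideanSpace ℝ (Fin n)) := {ξ | δ₁ ≤ ‖ξ‖ ∧ ‖ξ‖ < δ} with hs
  have hsm : MeasurableSet s := by
    have : s = {ξ : EuclideanSpace ℝ (Fin n) | δ₁ ≤ ‖ξ‖} ∩ {ξ | ‖ξ‖ < δ} := rfl
    rw [this]
    exact ((isClosed_le continuous_const continuous_norm).measurableSet).inter
      ((isOpen_lt continuous_norm continuous_const).measurableSet)
  have hsfin : volume s < ⊤ := by
    refine lt_of_le_of_lt (measure_mono ?_)
      (MeasureTheory.measure_ball_lt_top (x := (0 : EuclideanSpace ℝ (Fin n))) (r := δ))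
    intro ξ hξ
    simpa [Metric.mem_ball, dist_eq_norm] using hξ.2
  set V : ℝ := (volume s).toReal with hV
  have hV0 : 0 ≤ V := ENNReal.toReal_nonneg
  refine ⟨(2 / c) ^ 2 * (V + 1), c, 1, by positivity, hc0, one_pos, ?_⟩
  intro t ht
  have ht0 : 0 < t := lt_of_lt_of_le one_pos ht
  -- pointwise bound
  have key : ∀ ξ ∈ s, ‖|ν t ξ| ^ 2‖ ≤ (2 / c) ^ 2 * Real.exp (-c * t) := by
    intro ξ hξ
    obtain ⟨hr1, hr2⟩ := hξ
    set r : ℝ := ‖ξ‖ with hr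
    have hr0 : 0 < r := lt_of_lt_of_le hδ₁ hr1
    set Lr : ℝ := Real.log (1 + r) with hLr
    have hLr0 : 0 < Lr := Real.log_pos (by linarith)
    have hLrL : Lr ≤ L := Real.log_le_log (by linarith) (by linarith)
    have hlog : 2 * r < μ * Lr := log_concave_aux μ δ hμ hδ hroot hr0 hr2
    have hhpos : 0 < h r := by
      simp only [h]
      nlinarith
    set S : ℝ := Real.sqrt (h r) with hS
    have hS0 : 0 < S := Real.sqrt_pos.2 hhpos
    have hSsq : S ^ 2 = h r := Real.sq_sqrt hhpos.le
    have hSle : S ≤ μ * Lr := by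
      rw [hS]
      have h1 : h r ≤ (μ * Lr) ^ 2 := by simp only [h]; nlinarith
      calc Real.sqrt (h r) ≤ Real.sqrt ((μ * Lr) ^ 2) := Real.sqrt_le_sqrt h1
        _ = μ * Lr := by rw [Real.sqrt_sq (by positivity)]
    -- lp r ≤ -c
    have hdiff : (μ * Lr - S) * (μ * Lr + S) = 4 * r ^ 2 := by
      have : (μ * Lr) ^ 2 - S ^ 2 = 4 * r ^ 2 := by rw [hSsq]; simp only [h]; ring
      nlinarith [this]
    have hden : 0 < μ * Lr + S := by positivity
    have hestim : 2 * c ≤ μ * Lr - S := by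
      have h1 : μ * Lr - S = 4 * r ^ 2 / (μ * Lr + S) := by
        rw [eq_div_iff hden.ne']
        exact hdiff
      have h2 : μ * Lr + S ≤ 2 * (μ * L) := by nlinarith
      have h3 : 4 * δ₁ ^ 2 / (2 * (μ * L)) ≤ 4 * r ^ 2 / (μ * Lr + S) := by
        apply div_le_div₀ (by positivity) (by nlinarith) hden h2
      have h4 : 4 * δ₁ ^ 2 / (2 * (μ * L)) = 2 * c := by
        rw [hc]; field_simp; ring
      linarith [h3, h4.symm.le.trans h3]
    have hlp : lp r ≤ -c := by
      simp only [lp]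
      rw [← hS, ← hLr]
      linarith
    have hlm : lm r ≤ lp r := by
      simp only [lp, lm]; rw [← hS, ← hLr]
      linarith
    -- ν ≥ 0 and ν ≤ t * exp(lp r * t)
    have hν0 : 0 ≤ ν t ξ := by
      simp only [ν]
      rw [← hr, ← hS]
      apply div_nonneg _ hS0.le
      have := Real.exp_le_exp.2 (mul_le_mul_of_nonneg_right hlm ht0.le)
      linarith
    have hexpdiff : Real.exp (lp r * t) - Real.exp (lm r * t) ≤ S * t * Real.exp (lp r * t) := by
      have heq : lm r * t = lp r * t + (-(S * t)) := by
        simp only [lp, lm]; rw [← hS, ← hLr]; ring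
      rw [heq, Real.exp_add]
      have h1 := Real.add_one_le_exp (-(S * t))
      nlinarith [Real.exp_pos (lp r * t)]
    have hνle : ν t ξ ≤ t * Real.exp (lp r * t) := by
      simp only [ν]
      rw [← hr, ← hS]
      rw [div_le_iff₀ hS0]
      nlinarith
    have hexplp : Real.exp (lp r * t) ≤ Real.exp (-c * t) :=
      Real.exp_le_exp.2 (mul_le_mul_of_nonneg_right hlp ht0.le)
    have hνle2 : ν t ξ ≤ t * Real.exp (-c * t) := by
      calc ν t ξ ≤ t * Real.exp (lp r * t) := hνle
        _ ≤ t * Real.exp (-c * t) := by nlinarith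
    -- t * exp(-c t) ≤ (2/c) * exp(-c t / 2)
    have hte : t * Real.exp (-c * t) ≤ (2 / c) * Real.exp (-(c * t) / 2) := by
      have h1 := Real.add_one_le_exp (c * t / 2)
      have h2 : t ≤ (2 / c) * Real.exp (c * t / 2) := by
        rw [div_mul_eq_mul_div, le_div_iff₀ hc0]
        nlinarith
      have h3 : Real.exp (-c * t) = Real.exp (-(c * t) / 2) * Real.exp (-(c * t) / 2) := by
        rw [← Real.exp_add]; ring_nf
      have h4 : Real.exp (-(c*t)/2) * Real.exp (c*t/2) = 1 := by
        rw [← Real.exp_add]; ring_nf; exact Real.exp_zero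
      rw [h3]
      calc t * (Real.exp (-(c*t)/2) * Real.exp (-(c*t)/2))
          ≤ ((2/c) * Real.exp (c*t/2)) * (Real.exp (-(c*t)/2) * Real.exp (-(c*t)/2)) := by
            apply mul_le_mul_of_nonneg_right h2 (by positivity)
        _ = (2/c) * Real.exp (-(c*t)/2) * (Real.exp (-(c*t)/2) * Real.exp (c*t/2)) := by ring
        _ = (2/c) * Real.exp (-(c*t)/2) := by rw [h4, mul_one]
    have hfinal : ν t ξ ≤ (2 / c) * Real.exp (-(c * t) / 2) := le_trans hνle2 hte
    have h5 : ν t ξ ^ 2 ≤ (2 / c * Real.exp (-(c * t) / 2)) ^ 2 := by nlinarith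
    have h6 : (2 / c * Real.exp (-(c * t) / 2)) ^ 2 = (2 / c) ^ 2 * Real.exp (-c * t) := by
      rw [mul_pow, sq (Real.exp (-(c * t) / 2)), ← Real.exp_add]
      congr 1
      ring
    rw [Real.norm_eq_abs, abs_of_nonneg (pow_nonneg (abs_nonneg _) 2), sq_abs]
    linarith [h5, h6 ▸ h5]
  have hint := MeasureTheory.norm_setIntegral_le_of_norm_le_const hsfin key
  have h1 : (∫ ξ in s, |ν t ξ| ^ 2) ≤ ‖∫ ξ in s, |ν t ξ| ^ 2‖ := le_abs_self _
  calc (∫ ξ in s, |ν t ξ| ^ 2) ≤ ‖∫ ξ in s, |ν t ξ| ^ 2‖ := h1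
    _ ≤ (2 / c) ^ 2 * Real.exp (-c * t) * V := hint
    _ ≤ (2 / c) ^ 2 * (V + 1) * Real.exp (-c * t) := by
        nlinarith [Real.exp_pos (-c * t), sq_nonneg (2/c)]
end

section
/- Let n ≥ 1 and define f(r) := r² - log²(1+r) for r > 0 (so f(r) > 0 for r > 0). Then there exists η₀ > 0 such that for every η ∈ (0, η₀] there exist constants c > 0, C > 0 and t₀ > 0 with the property that for all t ≥ t₀ the integral I_n(t) := ∫₀^η (1+r)^{-2t} r^{n-1} (sin²(t√(f(r)))/f(r)) dr satisfies c t^{2-n} ≤ I_n(t) ≤ C t^{2-n}. -/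
open MeasureTheory

-- auxiliary lemmas
private lemma aux_log_lt {r : ℝ} (hr : 0 < r) : Real.log (1 + r) < r := by
  have := Real.log_lt_sub_one_of_pos (by linarith : (0:ℝ) < 1 + r) (by linarith)
  linarith

private lemma aux_f_pos {r : ℝ} (hr : 0 < r) : 0 < r ^ 2 - Real.log (1 + r) ^ 2 := by
  have h0 : 0 ≤ Real.log (1 + r) := Real.log_nonneg (by linarith)
  have h1 := aux_log_lt hr
  nlinarith

private lemma aux_log_ge {r : ℝ} (hr : 0 < r) (hr1 : r ≤ 1) : r / 2 ≤ Real.log (1 + r) := by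
  have h1 : (0:ℝ) < 1 + r := by linarith
  have h := Real.one_sub_inv_le_log_of_pos h1
  have hu : (1 + r)⁻¹ * (1 + r) = 1 := inv_mul_cancel₀ h1.ne'
  nlinarith

set_option maxHeartbeats 1000000 in
/-- Section 6 estimates (critical case `μ = 2`): with `f(r) = r² - log²(1+r)`, there
is `η₀ > 0` such that for every `η ∈ (0, η₀]`,
`I_n(t) = ∫₀^η (1+r)^{-2t} r^{n-1} sin²(t√(f(r)))/f(r) dr ∼ t^{2-n}` as `t → ∞`. -/
theorem stmt19 (n : ℕ) (hn : 1 ≤ n) :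
    let f : ℝ → ℝ := fun r => r ^ 2 - Real.log (1 + r) ^ 2
    (∀ r : ℝ, 0 < r → 0 < f r) ∧
    ∃ η₀ : ℝ, 0 < η₀ ∧ ∀ η ∈ Set.Ioc (0:ℝ) η₀, ∃ c C t₀ : ℝ,
      0 < c ∧ 0 < C ∧ 0 < t₀ ∧ ∀ t : ℝ, t₀ ≤ t →
        c * t ^ ((2 : ℝ) - n) ≤
          (∫ r in Set.Ioo (0:ℝ) η,
            (1 + r) ^ (-(2 * t)) * r ^ (n - 1) * (Real.sin (t * Real.sqrt (f r)) ^ 2 / f r)) ∧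
        (∫ r in Set.Ioo (0:ℝ) η,
            (1 + r) ^ (-(2 * t)) * r ^ (n - 1) * (Real.sin (t * Real.sqrt (f r)) ^ 2 / f r)) ≤
          C * t ^ ((2 : ℝ) - n) := by
  intro f
  obtain ⟨m, rfl⟩ : ∃ m, n = m + 1 := ⟨n - 1, (Nat.succ_pred_eq_of_pos hn).symm⟩
  refine ⟨fun r hr => aux_f_pos hr, 1, one_pos, ?_⟩
  rintro η ⟨hη0, hη1⟩
  refine ⟨9 / (16 * 2 ^ (m + 1) * Real.exp 2), (Nat.factorial m : ℝ) * 2 ^ (m + 1),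
    max 1 η⁻¹, by positivity, by positivity, lt_of_lt_of_le one_pos (le_max_left _ _), ?_⟩
  intro t ht
  have ht1 : (1:ℝ) ≤ t := le_trans (le_max_left _ _) ht
  have ht0 : (0:ℝ) < t := one_pos.trans_le ht1
  have htη : 1 / t ≤ η := by
    rw [div_le_iff₀ ht0]
    have : η⁻¹ ≤ t := le_trans (le_max_right _ _) ht
    calc (1:ℝ) = η * η⁻¹ := (mul_inv_cancel₀ hη0.ne').symm
    _ ≤ η * t := by gcongr
  set g : ℝ → ℝ := fun r =>
    (1 + r) ^ (-(2 * t)) * r ^ (m + 1 - 1) * (Real.sin (t * Real.sqrt (f r)) ^ 2 / f r) with hgdef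
  have hgm : Measurable g := by
    have hfm : Measurable f :=
      (measurable_id'.pow_const 2).sub
        ((Real.measurable_log.comp (measurable_id'.const_add 1)).pow_const 2)
    exact (((measurable_id'.const_add 1).pow_const _).mul (measurable_id'.pow_const _)).mul
      (((Real.measurable_sin.comp
        ((Real.continuous_sqrt.measurable.comp hfm).const_mul t)).pow_const 2).div hfm)
  -- pointwise upper bound on (0, η)
  have hub : ∀ r ∈ Set.Ioo (0:ℝ) η, g r ≤
      (t ^ 2 * ((Nat.factorial m : ℝ) * (2 / t) ^ m)) * Real.exp (-(t / 2) * r) := by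
    rintro r ⟨hr0, hrη⟩
    have hr1 : r ≤ 1 := le_of_lt (lt_of_lt_of_le hrη hη1)
    have h1r : (0:ℝ) < 1 + r := by linarith
    have hfr : 0 < f r := aux_f_pos hr0
    have hfle : f r ≤ r ^ 2 := by
      have := sq_nonneg (Real.log (1 + r)); simp only [f]; linarith
    -- first factor
    have e1 : (1 + r) ^ (-(2 * t)) ≤ Real.exp (-(t * r)) := by
      rw [Real.rpow_def_of_pos h1r]
      apply Real.exp_le_exp.mpr
      have hlb := aux_log_ge hr0 hr1
      nlinarith [mul_le_mul_of_nonneg_left hlb ht0.le]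
    -- third factor
    have e3 : Real.sin (t * Real.sqrt (f r)) ^ 2 / f r ≤ t ^ 2 := by
      rw [div_le_iff₀ hfr]
      have hs : Real.sin (t * Real.sqrt (f r)) ^ 2 ≤ (t * Real.sqrt (f r)) ^ 2 :=
        Real.sin_sq_le_sq
      have hx2 : (t * Real.sqrt (f r)) ^ 2 = t ^ 2 * f r := by
        rw [mul_pow, Real.sq_sqrt hfr.le]
      linarith
    -- second factor: r^m ≤ m! (2/t)^m exp(t r / 2)
    have e2 : r ^ m ≤ (Nat.factorial m : ℝ) * (2 / t) ^ m * Real.exp (t / 2 * r) := by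
      have h := Real.pow_div_factorial_le_exp (x := t / 2 * r) (by positivity) m
      rw [div_le_iff₀ (by positivity : (0:ℝ) < (Nat.factorial m : ℝ))] at h
      have key : r ^ m = (2 / t) ^ m * (t / 2 * r) ^ m := by
        rw [← mul_pow]
        congr 1
        field_simp
        try ring
      rw [key]
      calc (2 / t) ^ m * (t / 2 * r) ^ m
          ≤ (2 / t) ^ m * (Real.exp (t / 2 * r) * (Nat.factorial m : ℝ)) := by
            exact mul_le_mul_of_nonneg_left h (by positivity)
        _ = (Nat.factorial m : ℝ) * (2 / t) ^ m * Real.exp (t / 2 * r) := by ring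
    have hA : 0 ≤ (1 + r) ^ (-(2 * t)) := Real.rpow_nonneg h1r.le _
    have hB : (0:ℝ) ≤ r ^ (m + 1 - 1) := by positivity
    have hS : 0 ≤ Real.sin (t * Real.sqrt (f r)) ^ 2 / f r := by positivity
    calc g r ≤ Real.exp (-(t * r)) * r ^ m * t ^ 2 := by
          simp only [hgdef, Nat.add_sub_cancel]
          have h12 : (1 + r) ^ (-(2 * t)) * r ^ m ≤ Real.exp (-(t * r)) * r ^ m := by
            gcongr
          calc (1 + r) ^ (-(2 * t)) * r ^ m * (Real.sin (t * Real.sqrt (f r)) ^ 2 / f r)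
              ≤ (1 + r) ^ (-(2 * t)) * r ^ m * t ^ 2 := by
                apply mul_le_mul_of_nonneg_left e3 (by positivity)
            _ ≤ Real.exp (-(t * r)) * r ^ m * t ^ 2 := by
                apply mul_le_mul_of_nonneg_right h12 (by positivity)
      _ ≤ Real.exp (-(t * r)) * ((Nat.factorial m : ℝ) * (2 / t) ^ m
            * Real.exp (t / 2 * r)) * t ^ 2 := by
          apply mul_le_mul_of_nonneg_right _ (by positivity)
          exact mul_le_mul_of_nonneg_left e2 (Real.exp_nonneg _)
      _ = (t ^ 2 * ((Nat.factorial m : ℝ) * (2 / t) ^ m)) * Real.exp (-(t / 2) * r) := by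
          rw [mul_comm (Real.exp (-(t * r)))]
          rw [mul_assoc ((Nat.factorial m : ℝ) * (2 / t) ^ m), ← Real.exp_add]
          ring_nf
  -- nonnegativity on (0, η)
  have hnn : ∀ r ∈ Set.Ioo (0:ℝ) η, 0 ≤ g r := by
    rintro r ⟨hr0, hrη⟩
    have h1r : (0:ℝ) < 1 + r := by linarith
    have hfr : 0 < f r := aux_f_pos hr0
    have hA : 0 ≤ (1 + r) ^ (-(2 * t)) := Real.rpow_nonneg h1r.le _
    have : 0 ≤ Real.sin (t * Real.sqrt (f r)) ^ 2 / f r := by positivity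
    simp only [hgdef]
    positivity
  -- integrability of g on Ioo 0 η
  have hgi : IntegrableOn g (Set.Ioo (0:ℝ) η) := by
    apply Measure.integrableOn_of_bounded (M := t ^ 2 * ((Nat.factorial m : ℝ) * (2 / t) ^ m))
      (measure_Ioo_lt_top).ne hgm.aestronglyMeasurable
    rw [ae_restrict_iff' measurableSet_Ioo]
    filter_upwards with r hr
    rw [Real.norm_eq_abs, abs_of_nonneg (hnn r hr)]
    calc g r ≤ (t ^ 2 * ((Nat.factorial m : ℝ) * (2 / t) ^ m)) * Real.exp (-(t / 2) * r) :=
        hub r hr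
      _ ≤ (t ^ 2 * ((Nat.factorial m : ℝ) * (2 / t) ^ m)) * 1 := by
          apply mul_le_mul_of_nonneg_left _ (by positivity)
          exact Real.exp_le_one_iff.mpr (by nlinarith [hr.1])
      _ = t ^ 2 * ((Nat.factorial m : ℝ) * (2 / t) ^ m) := mul_one _
  have hrpow : t ^ ((2:ℝ) - (m + 1 : ℕ)) = t ^ 2 / t ^ (m + 1) := by
    rw [Real.rpow_sub ht0, Real.rpow_natCast,
      show ((2:ℝ)) = ((2:ℕ):ℝ) by norm_num, Real.rpow_natCast]
  constructor
  · -- LOWER BOUND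
    set a : ℝ := 1 / (2 * t) with ha
    set b : ℝ := 1 / t with hb
    have hab : a < b := by
      rw [ha, hb, div_lt_div_iff₀ (by positivity) ht0]
      nlinarith
    have hsub : Set.Ioo a b ⊆ Set.Ioo (0:ℝ) η := by
      intro r hr
      exact ⟨lt_trans (by positivity) hr.1, lt_of_lt_of_le (lt_of_lt_of_le hr.2 htη) le_rfl⟩
    have hlow : ∀ r ∈ Set.Ioo a b,
        Real.exp (-2) * a ^ m * (9 / 16 * t ^ 2) ≤ g r := by
      rintro r ⟨hra, hrb⟩
      have hr0 : 0 < r := lt_trans (by positivity) hra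
      have htr1 : t * r < 1 := by
        have h := mul_lt_mul_of_pos_left hrb ht0
        rwa [hb, mul_one_div, div_self ht0.ne'] at h
      have h1r : (0:ℝ) < 1 + r := by linarith
      have hfr : 0 < f r := aux_f_pos hr0
      have hfle : f r ≤ r ^ 2 := by
        have := sq_nonneg (Real.log (1 + r)); simp only [f]; linarith
      have hsq : Real.sqrt (f r) ≤ r :=
        (Real.sqrt_le_sqrt hfle).trans_eq (Real.sqrt_sq hr0.le)
      set x : ℝ := t * Real.sqrt (f r) with hx
      have hx0 : 0 < x := mul_pos ht0 (Real.sqrt_pos.mpr hfr)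
      have hx1 : x ≤ 1 := by
        have : x ≤ t * r := by
          apply mul_le_mul_of_nonneg_left hsq ht0.le
        linarith
      have hsin : 3 / 4 * x ≤ Real.sin x := by
        have h := Real.sin_gt_sub_cube hx0
        have hx3 : x ^ 3 ≤ x := by
          nlinarith [mul_nonneg (mul_nonneg hx0.le (sub_nonneg.2 hx1))
            (by linarith : (0:ℝ) ≤ 1 + x)]
        linarith
      have hsges : 0 ≤ Real.sin x := le_trans (by positivity) hsin
      have hsin2 : 9 / 16 * x ^ 2 ≤ Real.sin x ^ 2 := by
        nlinarith [mul_nonneg (sub_nonneg.2 hsin)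
          (add_nonneg hsges (by positivity : (0:ℝ) ≤ 3 / 4 * x))]
      have hx2 : x ^ 2 = t ^ 2 * f r := by
        rw [hx, mul_pow, Real.sq_sqrt hfr.le]
      have e3 : 9 / 16 * t ^ 2 ≤ Real.sin x ^ 2 / f r := by
        rw [le_div_iff₀ hfr]
        calc 9 / 16 * t ^ 2 * f r = 9 / 16 * x ^ 2 := by rw [hx2]; ring
          _ ≤ Real.sin x ^ 2 := hsin2
      have e1 : Real.exp (-2) ≤ (1 + r) ^ (-(2 * t)) := by
        rw [Real.rpow_def_of_pos h1r]
        apply Real.exp_le_exp.mpr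
        have hlog : Real.log (1 + r) ≤ r := le_of_lt (aux_log_lt hr0)
        have hlog0 : 0 ≤ Real.log (1 + r) := Real.log_nonneg (by linarith)
        nlinarith
      have e2 : a ^ m ≤ r ^ m := by
        apply pow_le_pow_left₀ (by positivity) hra.le
      have hA : 0 ≤ (1 + r) ^ (-(2 * t)) := Real.rpow_nonneg h1r.le _
      calc Real.exp (-2) * a ^ m * (9 / 16 * t ^ 2)
          ≤ (1 + r) ^ (-(2 * t)) * r ^ m * (Real.sin x ^ 2 / f r) := by
            apply mul_le_mul _ e3 (by positivity) (by positivity)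
            apply mul_le_mul e1 e2 (by positivity) hA
        _ = g r := by simp only [hgdef, Nat.add_sub_cancel, hx]
    have hvol : (volume (Set.Ioo a b)).toReal = 1 / (2 * t) := by
      rw [Real.volume_Ioo, ENNReal.toReal_ofReal (by linarith)]
      rw [ha, hb]
      field_simp
      ring
    have step1 := setIntegral_ge_of_const_le measurableSet_Ioo measure_Ioo_lt_top.ne hlow
      (hgi.mono_set hsub)
    have step2 : ∫ r in Set.Ioo a b, g r ≤ ∫ r in Set.Ioo (0:ℝ) η, g r := by
      apply setIntegral_mono_set hgi
      · rw [Filter.EventuallyLE, ae_restrict_iff' measurableSet_Ioo]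
        filter_upwards with r hr
        simpa using hnn r hr
      · exact HasSubset.Subset.eventuallyLE hsub
    have key : 9 / (16 * 2 ^ (m + 1) * Real.exp 2) * t ^ ((2:ℝ) - ((m + 1 : ℕ) : ℝ)) =
        Real.exp (-2) * a ^ m * (9 / 16 * t ^ 2) * (1 / (2 * t)) := by
      rw [hrpow, Real.exp_neg, ha]
      have he : (0:ℝ) < Real.exp 2 := Real.exp_pos 2
      field_simp
      have htm : t ^ m * t⁻¹ ^ m = 1 := by rw [← mul_pow, mul_inv_cancel₀ ht0.ne', one_pow]
      have h2m : (1 / 2 : ℝ) ^ m * 2 ^ m = 1 := by rw [← mul_pow]; norm_num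
      linear_combination (-2 * t * ((1 / 2 : ℝ) ^ m * 2 ^ m)) * htm + (-2 * t) * h2m
    rw [show ((m + 1 : ℕ) : ℝ) = ((m : ℝ) + 1) by push_cast; ring] at key ⊢
    calc 9 / (16 * 2 ^ (m + 1) * Real.exp 2) * t ^ ((2:ℝ) - ((m : ℝ) + 1))
        = Real.exp (-2) * a ^ m * (9 / 16 * t ^ 2) * (1 / (2 * t)) := key
      _ = Real.exp (-2) * a ^ m * (9 / 16 * t ^ 2) * (volume (Set.Ioo a b)).toReal := by
          rw [hvol]
      _ ≤ ∫ r in Set.Ioo a b, g r := by rw [mul_comm]; exact step1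
      _ ≤ ∫ r in Set.Ioo (0:ℝ) η, g r := step2
  · -- UPPER BOUND
    have hexp_int : IntegrableOn (fun r : ℝ => Real.exp (-(t / 2) * r)) (Set.Ioi 0) :=
      exp_neg_integrableOn_Ioi 0 (by positivity)
    have hexp_val : ∫ r in Set.Ioi (0:ℝ), Real.exp (-(t / 2) * r) = 2 / t := by
      have h := integral_comp_mul_left_Ioi (fun x => Real.exp (-x)) 0
        (half_pos ht0)
      simp only [mul_zero, neg_mul] at h ⊢
      rw [h, integral_exp_neg_Ioi_zero, smul_eq_mul, mul_one, inv_div]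
    have hKpos : (0:ℝ) ≤ t ^ 2 * ((Nat.factorial m : ℝ) * (2 / t) ^ m) := by positivity
    calc ∫ r in Set.Ioo (0:ℝ) η, g r
        ≤ ∫ r in Set.Ioo (0:ℝ) η,
            (t ^ 2 * ((Nat.factorial m : ℝ) * (2 / t) ^ m)) * Real.exp (-(t / 2) * r) := by
          apply setIntegral_mono_on hgi _ measurableSet_Ioo hub
          exact (hexp_int.mono_set Set.Ioo_subset_Ioi_self).const_mul _
      _ = (t ^ 2 * ((Nat.factorial m : ℝ) * (2 / t) ^ m)) *
            ∫ r in Set.Ioo (0:ℝ) η, Real.exp (-(t / 2) * r) := by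
          rw [integral_const_mul]
      _ ≤ (t ^ 2 * ((Nat.factorial m : ℝ) * (2 / t) ^ m)) *
            ∫ r in Set.Ioi (0:ℝ), Real.exp (-(t / 2) * r) := by
          apply mul_le_mul_of_nonneg_left _ hKpos
          apply setIntegral_mono_set hexp_int
          · filter_upwards with r using Real.exp_nonneg _
          · exact HasSubset.Subset.eventuallyLE Set.Ioo_subset_Ioi_self
      _ = (t ^ 2 * ((Nat.factorial m : ℝ) * (2 / t) ^ m)) * (2 / t) := by rw [hexp_val]
      _ = (Nat.factorial m : ℝ) * 2 ^ (m + 1) * t ^ ((2:ℝ) - ((m + 1 : ℕ) : ℝ)) := by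
          rw [hrpow]
          have hfm : (0:ℝ) < (Nat.factorial m : ℝ) := by positivity
          field_simp
          have htm : t ^ m * t⁻¹ ^ m = 1 := by rw [← mul_pow, mul_inv_cancel₀ ht0.ne', one_pow]
          linear_combination (2 * t * 2 ^ m) * htm
end
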